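/- For every integer t ≥ 4, there is a unique x*(t) ∈ (2t/(t+1)², 2/(t+1)) such that s_t is strictly increasing on [0, x*(t)] and strictly decreasing on [x*(t), 1/2], where s_t(x) = ((t+1)/2^t)·x·((1−√(1−2x))^{t−1}+(1+√(1−2x))^{t−1}). -/

import Mathlib

/-- `s_t(x) = ((t+1)/2^t)·x·((1−√(1−2x))^{t−1} + (1+√(1−2x))^{t−1})`. -/
noncomputable def sfun (t : ℕ) (x : ℝ) : ℝ :=
  ((t : ℝ) + 1) / 2 ^ t * x *
    ((1 - Real.sqrt (1 - 2 * x)) ^ (t - 1) + (1 + Real.sqrt (1 - 2 * x)) ^ (t - 1))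

open Set


lemma hsign (m : ℕ) :
    ∃ ys : ℝ, ys ∈ Set.Ioo (1/((m:ℝ)+4)) (1/((m:ℝ)+3)) ∧
      (∀ y ∈ Set.Ico (0:ℝ) ys, 0 < 1 - ((m:ℝ)+4)*y + ((m:ℝ)+4)*y^(m+3) - y^(m+4)) ∧
      (∀ y ∈ Set.Ioo ys (1:ℝ), 1 - ((m:ℝ)+4)*y + ((m:ℝ)+4)*y^(m+3) - y^(m+4) < 0) := by
  have hm0 : (0:ℝ) ≤ (m:ℝ) := Nat.cast_nonneg m
  set T : ℝ := (m:ℝ)+4 with hT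
  set h : ℝ → ℝ := fun y => 1 - T*y + T*y^(m+3) - y^(m+4) with hh
  set q : ℝ → ℝ := fun y => ((m:ℝ)+3)*y^(m+2) - y^(m+3) with hq
  have hT3pos : (0:ℝ) < (m:ℝ)+3 := by linarith
  have hTpos : (0:ℝ) < T := by rw [hT]; linarith
  have hcont : Continuous h := by fun_prop
  have qcont : Continuous q := by fun_prop
  -- derivative of h
  have hderiv : ∀ y : ℝ, HasDerivAt h (T*(q y - 1)) y := by
    intro y
    have h1 : HasDerivAt (fun y : ℝ => 1 - T*y + T*y^(m+3) - y^(m+4))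
        (0 - T*1 + T*(((m+3:ℕ):ℝ)*y^(m+2)) - ((m+4:ℕ):ℝ)*y^(m+3)) y :=
      (((hasDerivAt_const y (1:ℝ)).sub ((hasDerivAt_id y).const_mul T)).add
        ((hasDerivAt_pow (m+3) y).const_mul T)).sub (hasDerivAt_pow (m+4) y)
    have e : T*(q y - 1) = 0 - T*1 + T*(((m+3:ℕ):ℝ)*y^(m+2)) - ((m+4:ℕ):ℝ)*y^(m+3) := by
      rw [hq, hT]; push_cast; ring
    rw [e]; exact h1
  -- q is strictly monotone on [0,1]
  have qmono : StrictMonoOn q (Icc (0:ℝ) 1) := by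
    apply strictMonoOn_of_deriv_pos (convex_Icc 0 1) qcont.continuousOn
    intro y hy
    rw [interior_Icc] at hy
    have hqd : HasDerivAt q (((m:ℝ)+3)*(((m+2:ℕ):ℝ)*y^(m+1)) - ((m+3:ℕ):ℝ)*y^(m+2)) y :=
      ((hasDerivAt_pow (m+2) y).const_mul _).sub (hasDerivAt_pow (m+3) y)
    rw [hqd.deriv]
    have h1 : (0:ℝ) < y := hy.1
    have h2 : y < 1 := hy.2
    have h3 : (0:ℝ) < y^(m+1) := pow_pos h1 (m+1)
    have h4 : y^(m+2) = y^(m+1)*y := by ring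
    push_cast
    rw [h4]
    have h5 := mul_pos (mul_pos hT3pos h3) (show (0:ℝ) < ((m:ℝ)+2)-y by linarith)
    nlinarith [h5]
  -- the critical point c where q c = 1
  have q0 : q 0 = 0 := by simp [hq]
  have q1 : q 1 = (m:ℝ)+2 := by simp [hq]; ring
  obtain ⟨c, hc, hqc⟩ : ∃ c ∈ Icc (0:ℝ) 1, q c = 1 := by
    have hsub := intermediate_value_Icc (by norm_num : (0:ℝ) ≤ 1) qcont.continuousOn
    have h1 : (1:ℝ) ∈ Icc (q 0) (q 1) := by
      rw [q0, q1]; constructor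
      · norm_num
      · linarith
    exact hsub h1
  have hc0 : 0 < c := by
    rcases lt_or_eq_of_le hc.1 with h | h
    · exact h
    · exfalso; rw [← h] at hqc; rw [q0] at hqc; norm_num at hqc
  have hc1 : c < 1 := by
    rcases lt_or_eq_of_le hc.2 with h | h
    · exact h
    · exfalso; rw [h, q1] at hqc; linarith
  -- h is strictly decreasing on [0,c], strictly increasing on [c,1]
  have hanti : StrictAntiOn h (Icc 0 c) := by
    apply strictAntiOn_of_deriv_neg (convex_Icc 0 c) hcont.continuousOn
    intro y hy
    rw [interior_Icc] at hy
    rw [(hderiv y).deriv]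
    have : q y < 1 := by
      rw [← hqc]
      exact qmono ⟨hy.1.le, by linarith [hc.2, hy.2]⟩ ⟨hc.1, hc.2⟩ hy.2
    nlinarith
  have hmono : StrictMonoOn h (Icc c 1) := by
    apply strictMonoOn_of_deriv_pos (convex_Icc c 1) hcont.continuousOn
    intro y hy
    rw [interior_Icc] at hy
    rw [(hderiv y).deriv]
    have : 1 < q y := by
      rw [← hqc]
      exact qmono ⟨hc.1, hc.2⟩ ⟨by linarith [hc.1, hy.1], hy.2.le⟩ hy.1
    nlinarith
  have h1val : h 1 = 0 := by simp [hh]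
  -- endpoint sign values
  have ha : 0 < h (1/T) := by
    have hval : h (1/T) = (T - 1/T) * (1/T)^(m+3) := by
      rw [hh]
      simp only [one_div, inv_pow]
      field_simp
      ring
    rw [hval]
    have h5 : 1/T < T := by
      rw [div_lt_iff₀ hTpos]; nlinarith
    have h2 : (0:ℝ) < (1/T)^(m+3) := by positivity
    nlinarith
  have hb : h (1/((m:ℝ)+3)) < 0 := by
    have hne : ((m:ℝ)+3) ≠ 0 := ne_of_gt hT3pos
    have hp : (0:ℝ) < ((m:ℝ)+3)^(m+4) := by positivity
    have key : ((m:ℝ)+4)*((m:ℝ)+3) - 1 < ((m:ℝ)+3)^(m+3) := by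
      have h1 : ((m:ℝ)+3)^3 ≤ ((m:ℝ)+3)^(m+3) :=
        pow_le_pow_right₀ (by linarith) (by omega)
      nlinarith [hm0, sq_nonneg ((m:ℝ)), pow_nonneg hm0 3]
    have e3 : h (1/((m:ℝ)+3)) * ((m:ℝ)+3)^(m+4)
        = (((m:ℝ)+4)*((m:ℝ)+3) - 1) - ((m:ℝ)+3)^(m+3) := by
      rw [hh, hT]
      simp only [one_div, inv_pow]
      field_simp
      ring
    nlinarith [e3, key, hp]
  -- the zero ys of h
  have hi1 : (1:ℝ)/T ≤ 1/((m:ℝ)+3) := by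
    apply one_div_le_one_div_of_le hT3pos
    rw [hT]; linarith
  obtain ⟨ys, hys, hhys⟩ : ∃ ys ∈ Icc (1/T) (1/((m:ℝ)+3)), h ys = 0 := by
    have hsub := intermediate_value_Icc' hi1 hcont.continuousOn
    exact hsub ⟨hb.le, ha.le⟩
  have hys1 : ys ≠ 1/T := by
    intro he; rw [← he] at ha; linarith [ha, hhys.le, hhys.ge]
  have hys2 : ys ≠ 1/((m:ℝ)+3) := by
    intro he; rw [← he] at hb; linarith [hb, hhys.le, hhys.ge]
  have hys0 : 0 < ys := lt_of_lt_of_le (by positivity) hys.1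
  have hyslt1 : ys < 1 := by
    have h2 : ys ≤ 1/((m:ℝ)+3) := hys.2
    have h3 : (1:ℝ)/((m:ℝ)+3) ≤ 1/3 := by
      apply one_div_le_one_div_of_le (by norm_num)
      linarith
    linarith
  have hcneg : h c < 0 := by
    have := hmono ⟨le_refl c, hc.2⟩ ⟨hc.2, le_refl 1⟩ hc1
    linarith [h1val]
  have hysc : ys ≤ c := by
    by_contra hlt
    push_neg at hlt
    have := hmono ⟨hlt.le, hyslt1.le⟩ ⟨hc.2, le_refl 1⟩ hyslt1
    rw [h1val] at this
    linarith [hhys.ge]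
  have hysc' : ys < c := by
    rcases lt_or_eq_of_le hysc with hl | he
    · exact hl
    · exfalso; rw [he] at hhys; linarith
  refine ⟨ys, ⟨lt_of_le_of_ne hys.1 (Ne.symm hys1), lt_of_le_of_ne hys.2 hys2⟩, ?_, ?_⟩
  · intro y hy
    show 0 < h y
    have := hanti ⟨hy.1, by linarith [hy.2]⟩ ⟨hys0.le, hysc⟩ hy.2
    linarith
  · intro y hy
    show h y < 0
    rcases le_or_gt y c with hyc | hyc
    · have := hanti ⟨hys0.le, hysc⟩ ⟨by linarith [hy.1], hyc⟩ hy.1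
      linarith
    · have := hmono ⟨hyc.le, hy.2.le⟩ ⟨hc.2, le_refl 1⟩ hy.2
      rw [h1val] at this
      linarith

lemma gmono (m : ℕ) :
    ∃ ys : ℝ, ys ∈ Set.Ioo (1/((m:ℝ)+4)) (1/((m:ℝ)+3)) ∧
      StrictMonoOn (fun y : ℝ => (y + y^(m+4))/(1+y)^(m+5)) (Set.Icc 0 ys) ∧
      StrictAntiOn (fun y : ℝ => (y + y^(m+4))/(1+y)^(m+5)) (Set.Icc ys 1) := by
  obtain ⟨ys, hysI, hpos, hneg⟩ := hsign m
  have hm0 : (0:ℝ) ≤ (m:ℝ) := Nat.cast_nonneg m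
  set g : ℝ → ℝ := fun y => (y + y^(m+4))/(1+y)^(m+5) with hg
  have hys0 : (0:ℝ) < ys := lt_trans (by positivity) hysI.1
  have hys1 : ys < 1 := by
    have h3 : (1:ℝ)/((m:ℝ)+3) ≤ 1/3 := by
      apply one_div_le_one_div_of_le (by norm_num); linarith
    linarith [hysI.2]
  have gder : ∀ y : ℝ, 0 ≤ y → HasDerivAt g
      ((1 - ((m:ℝ)+4)*y + ((m:ℝ)+4)*y^(m+3) - y^(m+4))/(1+y)^(m+6)) y := by
    intro y hy
    have h1y : (0:ℝ) < 1 + y := by linarith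
    have hu : HasDerivAt (fun y : ℝ => y + y^(m+4)) (1 + ((m+4:ℕ):ℝ)*y^(m+3)) y :=
      (hasDerivAt_id y).add (hasDerivAt_pow (m+4) y)
    have hv : HasDerivAt (fun y : ℝ => (1+y)^(m+5))
        (((m+5:ℕ):ℝ)*(1+y)^(m+4)*(0+1)) y :=
      ((hasDerivAt_const y (1:ℝ)).add (hasDerivAt_id y)).pow (m+5)
    have hvne : (1+y)^(m+5) ≠ 0 := by positivity
    have hd := hu.div hv hvne
    refine hd.congr_deriv ?_
    rw [div_eq_div_iff (by positivity) (by positivity)]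
    push_cast
    ring
  have hcont : ContinuousOn g (Icc (0:ℝ) 1) := by
    apply ContinuousOn.div (by fun_prop) (by fun_prop)
    intro y hy
    have : (0:ℝ) < 1 + y := by linarith [hy.1]
    positivity
  constructor
  constructor
  · exact hysI
  constructor
  · apply strictMonoOn_of_deriv_pos (convex_Icc 0 ys)
    · exact hcont.mono (Icc_subset_Icc (le_refl 0) hys1.le)
    · intro y hy
      rw [interior_Icc] at hy
      rw [(gder y hy.1.le).deriv]
      have h1y : (0:ℝ) < 1 + y := by linarith [hy.1]
      exact div_pos (hpos y ⟨hy.1.le, hy.2⟩) (by positivity)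
  · apply strictAntiOn_of_deriv_neg (convex_Icc ys 1)
    · exact hcont.mono (Icc_subset_Icc hys0.le (le_refl 1))
    · intro y hy
      rw [interior_Icc] at hy
      have hy0 : (0:ℝ) < y := lt_trans hys0 hy.1
      rw [(gder y hy0.le).deriv]
      have h1y : (0:ℝ) < 1 + y := by linarith
      exact div_neg_of_neg_of_pos (hneg y ⟨hy.1, hy.2⟩) (by positivity)

noncomputable def phi (x : ℝ) : ℝ :=
  (1 - Real.sqrt (1 - 2*x)) / (1 + Real.sqrt (1 - 2*x))

lemma phi_mem {x : ℝ} (hx : x ∈ Icc (0:ℝ) (1/2)) : phi x ∈ Icc (0:ℝ) 1 := by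
  have h1 : (0:ℝ) ≤ 1 - 2*x := by linarith [hx.2]
  have hs0 : 0 ≤ Real.sqrt (1 - 2*x) := Real.sqrt_nonneg _
  have hs1 : Real.sqrt (1 - 2*x) ≤ 1 := by
    nlinarith [Real.sq_sqrt h1, Real.sqrt_nonneg (1-2*x), hx.1]
  constructor
  · exact div_nonneg (by linarith) (by linarith)
  · rw [phi, div_le_one (by linarith)]; linarith

lemma phi_strictMono : StrictMonoOn phi (Icc (0:ℝ) (1/2)) := by
  intro a ha b hb hab
  have h1 : (0:ℝ) ≤ 1 - 2*b := by linarith [hb.2]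
  have hsa := Real.sqrt_nonneg (1 - 2*a)
  have hsb := Real.sqrt_nonneg (1 - 2*b)
  have hlt : Real.sqrt (1 - 2*b) < Real.sqrt (1 - 2*a) := by
    apply Real.sqrt_lt_sqrt h1 (by linarith)
  rw [phi, phi, div_lt_div_iff₀ (by linarith) (by linarith)]
  nlinarith

lemma phi_inv {y : ℝ} (hy : y ∈ Icc (0:ℝ) 1) :
    phi (2*y/(1+y)^2) = y ∧ 2*y/(1+y)^2 ∈ Icc (0:ℝ) (1/2) := by
  have h1y : (0:ℝ) < 1 + y := by linarith [hy.1]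
  have hmem : 2*y/(1+y)^2 ∈ Icc (0:ℝ) (1/2) := by
    constructor
    · exact div_nonneg (by linarith [hy.1]) (by positivity)
    · rw [div_le_iff₀ (by positivity)]
      nlinarith [sq_nonneg (1-y), hy.1]
  have hsq : 1 - 2*(2*y/(1+y)^2) = ((1-y)/(1+y))^2 := by
    field_simp
    ring
  have hsqrt : Real.sqrt (1 - 2*(2*y/(1+y)^2)) = (1-y)/(1+y) := by
    rw [hsq]
    exact Real.sqrt_sq (div_nonneg (by linarith [hy.2]) h1y.le)
  refine ⟨?_, hmem⟩
  rw [phi, hsqrt]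
  have h2 : 1 + (1-y)/(1+y) = 2/(1+y) := by field_simp; norm_num
  have h3 : 1 - (1-y)/(1+y) = 2*y/(1+y) := by field_simp; ring
  rw [h2, h3]
  rw [div_div_div_cancel_right₀]
  · ring_nf
  · exact ne_of_gt h1y

lemma sfun_eq (m : ℕ) {x : ℝ} (hx : x ∈ Icc (0:ℝ) (1/2)) :
    sfun (m+4) x = ((m:ℝ)+5) * ((phi x + (phi x)^(m+4))/(1+(phi x))^(m+5)) := by
  have h1 : (0:ℝ) ≤ 1 - 2*x := by linarith [hx.2]
  set s : ℝ := Real.sqrt (1 - 2*x) with hs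
  have hs2 : s^2 = 1 - 2*x := Real.sq_sqrt h1
  have hs0 : 0 ≤ s := Real.sqrt_nonneg _
  have h1s : (0:ℝ) < 1 + s := by linarith
  have hxval : x = (1 - s^2)/2 := by linarith [hs2]
  have hyval : 1 + phi x = 2/(1+s) := by
    rw [phi, ← hs]
    field_simp
    norm_num
  have hne : ((m+4:ℕ):ℝ) + 1 = (m:ℝ)+5 := by push_cast; ring
  have hexp : (m+4) - 1 = m+3 := rfl
  rw [sfun, hyval, phi, ← hs, hexp, hne, hxval]
  rw [div_pow, div_pow]
  field_simp
  ring


lemma xlt {a b : ℝ} (ha : 0 ≤ a) (hb : b ≤ 1) (hab : a < b) :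
    2*a/(1+a)^2 < 2*b/(1+b)^2 := by
  have h1 : (0:ℝ) < 1+a := by linarith
  have h2 : (0:ℝ) < 1+b := by linarith
  rw [div_lt_div_iff₀ (by positivity) (by positivity)]
  have hab1 : a*b < 1 := by nlinarith
  nlinarith [mul_pos (sub_pos.mpr hab) (sub_pos.mpr hab1)]

/-- For every `t ≥ 4` there is a unique `x*(t) ∈ (2t/(t+1)², 2/(t+1))` such that
`s_t` is strictly increasing on `[0, x*(t)]` and strictly decreasing on `[x*(t), 1/2]`. -/
theorem stmt14 (t : ℕ) (ht : 4 ≤ t) :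
    ∃! xs : ℝ, xs ∈ Set.Ioo (2 * (t : ℝ) / ((t : ℝ) + 1) ^ 2) (2 / ((t : ℝ) + 1)) ∧
      StrictMonoOn (sfun t) (Set.Icc 0 xs) ∧
      StrictAntiOn (sfun t) (Set.Icc xs (1 / 2)) := by
  obtain ⟨m, rfl⟩ : ∃ m, t = m + 4 := ⟨t - 4, by omega⟩
  have hm0 : (0:ℝ) ≤ (m:ℝ) := Nat.cast_nonneg m
  have hcast : ((m+4:ℕ):ℝ) = (m:ℝ)+4 := by push_cast; ring
  rw [hcast]
  obtain ⟨ys, hysI, gm, ga⟩ := gmono m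
  have hT4 : (0:ℝ) < (m:ℝ)+4 := by linarith
  have hT3 : (0:ℝ) < (m:ℝ)+3 := by linarith
  have hys0 : (0:ℝ) < ys := lt_trans (by positivity) hysI.1
  have hys1 : ys < 1 := by
    have h3 : (1:ℝ)/((m:ℝ)+3) ≤ 1/3 := by
      apply one_div_le_one_div_of_le (by norm_num); linarith
    linarith [hysI.2]
  set xs := 2*ys/(1+ys)^2 with hxs
  obtain ⟨hphixs, hxsmem⟩ := phi_inv (y := ys) ⟨hys0.le, hys1.le⟩
  -- interval bounds for xs
  have hlow : 2*((m:ℝ)+4)/(((m:ℝ)+4)+1)^2 < xs := by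
    have h1 := xlt (a := 1/((m:ℝ)+4)) (b := ys) (by positivity) hys1.le hysI.1
    have h2 : 2*(1/((m:ℝ)+4))/(1+1/((m:ℝ)+4))^2 = 2*((m:ℝ)+4)/(((m:ℝ)+4)+1)^2 := by
      rw [div_eq_div_iff (by positivity) (by positivity)]
      field_simp
    rw [← h2]; exact h1
  have hup : xs < 2/(((m:ℝ)+4)+1) := by
    have hb1 : (1:ℝ)/((m:ℝ)+3) ≤ 1 := by
      rw [div_le_one hT3]; linarith
    have h1 := xlt (a := ys) (b := 1/((m:ℝ)+3)) hys0.le hb1 hysI.2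
    have h2 : 2*(1/((m:ℝ)+3))/(1+1/((m:ℝ)+3))^2 ≤ 2/(((m:ℝ)+4)+1) := by
      have e : 2*(1/((m:ℝ)+3))/(1+1/((m:ℝ)+3))^2 = 2*((m:ℝ)+3)/((m:ℝ)+4)^2 := by
        rw [div_eq_div_iff (by positivity) (by positivity)]
        field_simp
        ring
      rw [e, div_le_div_iff₀ (by positivity) (by positivity)]
      nlinarith
    calc xs < _ := h1
      _ ≤ _ := h2
  have hxs0 : 0 < xs := by positivity
  have hxshalf : xs ≤ 1/2 := hxsmem.2
  -- monotonicity of sfun on [0, xs]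
  have hmono : StrictMonoOn (sfun (m+4)) (Set.Icc 0 xs) := by
    intro a ha b hb hab
    have ha' : a ∈ Icc (0:ℝ) (1/2) := ⟨ha.1, le_trans ha.2 hxshalf⟩
    have hb' : b ∈ Icc (0:ℝ) (1/2) := ⟨hb.1, le_trans hb.2 hxshalf⟩
    have hpa : phi a ∈ Icc (0:ℝ) ys := by
      refine ⟨(phi_mem ha').1, ?_⟩
      rw [← hphixs]
      exact phi_strictMono.monotoneOn ha' hxsmem ha.2
    have hpb : phi b ∈ Icc (0:ℝ) ys := by
      refine ⟨(phi_mem hb').1, ?_⟩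
      rw [← hphixs]
      exact phi_strictMono.monotoneOn hb' hxsmem hb.2
    rw [sfun_eq m ha', sfun_eq m hb']
    have := gm hpa hpb (phi_strictMono ha' hb' hab)
    have hm5 : (0:ℝ) < (m:ℝ)+5 := by linarith
    exact mul_lt_mul_of_pos_left this hm5
  have hanti : StrictAntiOn (sfun (m+4)) (Set.Icc xs (1/2)) := by
    intro a ha b hb hab
    have ha' : a ∈ Icc (0:ℝ) (1/2) := ⟨le_trans hxs0.le ha.1, ha.2⟩
    have hb' : b ∈ Icc (0:ℝ) (1/2) := ⟨le_trans hxs0.le hb.1, hb.2⟩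
    have hpa : phi a ∈ Icc ys (1:ℝ) := by
      refine ⟨?_, (phi_mem ha').2⟩
      rw [← hphixs]
      exact phi_strictMono.monotoneOn hxsmem ha' ha.1
    have hpb : phi b ∈ Icc ys (1:ℝ) := by
      refine ⟨?_, (phi_mem hb').2⟩
      rw [← hphixs]
      exact phi_strictMono.monotoneOn hxsmem hb' hb.1
    rw [sfun_eq m ha', sfun_eq m hb']
    have := ga hpa hpb (phi_strictMono ha' hb' hab)
    have hm5 : (0:ℝ) < (m:ℝ)+5 := by linarith
    exact mul_lt_mul_of_pos_left this hm5
  -- uniqueness helper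
  have lowpos : (0:ℝ) < 2*((m:ℝ)+4)/(((m:ℝ)+4)+1)^2 := by positivity
  have uphalf : 2/(((m:ℝ)+4)+1) ≤ 1/2 := by
    rw [div_le_div_iff₀ (by positivity) (by norm_num)]
    linarith
  have key : ∀ u v : ℝ,
      u ∈ Set.Ioo (2*((m:ℝ)+4)/(((m:ℝ)+4)+1)^2) (2/(((m:ℝ)+4)+1)) →
      v ∈ Set.Ioo (2*((m:ℝ)+4)/(((m:ℝ)+4)+1)^2) (2/(((m:ℝ)+4)+1)) →
      StrictMonoOn (sfun (m+4)) (Set.Icc 0 v) →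
      StrictAntiOn (sfun (m+4)) (Set.Icc u (1/2)) → ¬ (u < v) := by
    intro u v hu hv hmv hau huv
    have hu0 : 0 < u := lt_trans lowpos hu.1
    have hvh : v ≤ 1/2 := le_trans hv.2.le uphalf
    have h1 : sfun (m+4) u < sfun (m+4) v :=
      hmv ⟨hu0.le, huv.le⟩ ⟨le_trans hu0.le huv.le, le_refl v⟩ huv
    have h2 : sfun (m+4) v < sfun (m+4) u :=
      hau ⟨le_refl u, le_trans huv.le hvh⟩ ⟨huv.le, hvh⟩ huv
    linarith
  refine ⟨xs, ⟨⟨hlow, hup⟩, hmono, hanti⟩, ?_⟩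
  rintro x' ⟨hx'I, hm', ha'⟩
  rcases lt_trichotomy x' xs with h | h | h
  · exact absurd h (key x' xs hx'I ⟨hlow, hup⟩ hmono ha')
  · exact h
  · exact absurd h (key xs x' ⟨hlow, hup⟩ hx'I hm' hanti)
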